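/- (Characterization of the need-adjusted full-transfer rule) A rule φ on linear hierarchy problems with needs satisfying highest rank splitting neutrality, hierarchical order preservation, and needs lower bound must be the need-adjusted full-transfer rule: φ_i(M,r,z) = z_i for i < m and φ_m(M,r,z) = z_m + Σ_{j∈M}(r_j - z_j). -/

import Mathlib

/-- A valid linear hierarchy problem with needs. -/
def Valid (m : ℕ) (r z : ℕ → ℝ) : Prop :=
  0 < m ∧ ∀ i < m, 0 ≤ z i ∧ z i ≤ r i

theorem characterization_need_adjusted_full_transfer_rule
    (φ : ℕ → (ℕ → ℝ) → (ℕ → ℝ) → ℕ → ℝ)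
    -- φ is a rule: nonnegative allocations satisfying balance
    (hrule : ∀ m r z, Valid m r z →
      (∀ i < m, 0 ≤ φ m r z i) ∧
      ∑ i ∈ Finset.range m, φ m r z i = ∑ i ∈ Finset.range m, r i)
    -- highest rank splitting neutrality
    (hhrsn : ∀ m r z r' z', Valid m r z → Valid (m + 1) r' z' →
      (∀ j, j + 1 < m → r' j = r j ∧ z' j = z j) →
      r' (m - 1) + r' m = r (m - 1) →
      z' (m - 1) + z' m = z (m - 1) →
      ∀ i, i + 1 < m → φ (m + 1) r' z' i = φ m r z i)
    -- hierarchical order preservation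
    (hhop : ∀ m r z, Valid m r z → ∀ i < m, ∀ j < m, j ≤ i →
      φ m r z j - z j ≤ φ m r z i - z i)
    -- needs lower bound
    (hnlb : ∀ m r z, Valid m r z → ∀ i < m, z i ≤ φ m r z i) :
    ∀ m r z, Valid m r z →
      (∀ i, i + 1 < m → φ m r z i = z i) ∧
      φ m r z (m - 1) =
        z (m - 1) + ∑ j ∈ Finset.range m, (r j - z j) := by
  intro m r z hv
  obtain ⟨hm, hz⟩ := hv
  have hv' : Valid m r z := ⟨hm, hz⟩
  -- the split families
  set R : ℕ → ℕ → ℝ := fun k j =>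
    if j < m - 1 then r j else if j = m - 1 + k then r (m - 1) else 0 with hRdef
  set Z : ℕ → ℕ → ℝ := fun k j =>
    if j < m - 1 then z j else if j = m - 1 + k then z (m - 1) else 0 with hZdef
  have hR1 : ∀ k j, j < m - 1 → R k j = r j ∧ Z k j = z j := by
    intro k j hj
    constructor <;> simp [hRdef, hZdef, hj]
  have hR2 : ∀ k, R k (m - 1 + k) = r (m - 1) ∧ Z k (m - 1 + k) = z (m - 1) := by
    intro k
    have hc : ¬ m - 1 + k < m - 1 := by omega
    constructor <;> simp [hRdef, hZdef, hc]
  have hR3 : ∀ k j, ¬ j < m - 1 → j ≠ m - 1 + k → R k j = 0 ∧ Z k j = 0 := by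
    intro k j h1 h2
    constructor <;> simp [hRdef, hZdef, h1, h2]
  -- validity of split problems
  have hvR : ∀ k, 1 ≤ k → Valid (m + k) (R k) (Z k) := by
    intro k hk
    refine ⟨by omega, ?_⟩
    intro j hj
    by_cases h1 : j < m - 1
    · rw [(hR1 k j h1).1, (hR1 k j h1).2]
      exact hz j (by omega)
    · by_cases h2 : j = m - 1 + k
      · subst h2
        rw [(hR2 k).1, (hR2 k).2]
        exact hz (m - 1) (by omega)
      · rw [(hR3 k j h1 h2).1, (hR3 k j h1 h2).2]
        exact ⟨le_rfl, le_rfl⟩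
  have hm1 : m - 1 + 1 = m := by omega
  -- sums of the split problems
  have hsumR : ∀ k, 1 ≤ k → ∑ j ∈ Finset.range (m + k), R k j = ∑ j ∈ Finset.range m, r j := by
    intro k hk
    have hsplit : ∑ j ∈ Finset.range (m + k), R k j
        = ∑ j ∈ Finset.range (m - 1), R k j + ∑ j ∈ Finset.Ico (m - 1) (m + k), R k j := by
      rw [Finset.range_eq_Ico, ← Finset.sum_Ico_consecutive _ (Nat.zero_le (m - 1))
        (by omega : m - 1 ≤ m + k), Finset.range_eq_Ico]
    rw [hsplit]
    have h1 : ∑ j ∈ Finset.range (m - 1), R k j = ∑ j ∈ Finset.range (m - 1), r j :=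
      Finset.sum_congr rfl fun j hj => (hR1 k j (Finset.mem_range.1 hj)).1
    have h2 : ∑ j ∈ Finset.Ico (m - 1) (m + k), R k j = r (m - 1) := by
      rw [Finset.sum_eq_single_of_mem (m - 1 + k)
        (Finset.mem_Ico.2 ⟨by omega, by omega⟩)
        (fun j hj hne => (hR3 k j (by have := (Finset.mem_Ico.1 hj).1; omega) hne).1)]
      exact (hR2 k).1
    rw [h1, h2]
    conv_rhs => rw [← hm1, Finset.sum_range_succ]
  have hsumZ : ∀ k, 1 ≤ k → ∑ j ∈ Finset.range (m + k), Z k j = ∑ j ∈ Finset.range m, z j := by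
    intro k hk
    have hsplit : ∑ j ∈ Finset.range (m + k), Z k j
        = ∑ j ∈ Finset.range (m - 1), Z k j + ∑ j ∈ Finset.Ico (m - 1) (m + k), Z k j := by
      rw [Finset.range_eq_Ico, ← Finset.sum_Ico_consecutive _ (Nat.zero_le (m - 1))
        (by omega : m - 1 ≤ m + k), Finset.range_eq_Ico]
    rw [hsplit]
    have h1 : ∑ j ∈ Finset.range (m - 1), Z k j = ∑ j ∈ Finset.range (m - 1), z j :=
      Finset.sum_congr rfl fun j hj => (hR1 k j (Finset.mem_range.1 hj)).2
    have h2 : ∑ j ∈ Finset.Ico (m - 1) (m + k), Z k j = z (m - 1) := by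
      rw [Finset.sum_eq_single_of_mem (m - 1 + k)
        (Finset.mem_Ico.2 ⟨by omega, by omega⟩)
        (fun j hj hne => (hR3 k j (by have := (Finset.mem_Ico.1 hj).1; omega) hne).2)]
      exact (hR2 k).2
    rw [h1, h2]
    conv_rhs => rw [← hm1, Finset.sum_range_succ]
  -- chain of splittings
  have chain : ∀ k i, i + 1 < m → φ (m + (k + 1)) (R (k + 1)) (Z (k + 1)) i = φ m r z i := by
    intro k
    induction k with
    | zero =>
      intro i hi
      refine hhrsn m r z (R 1) (Z 1) hv' (hvR 1 le_rfl) ?_ ?_ ?_ i hi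
      · intro j hj
        exact hR1 1 j (by omega)
      · have e1 := (hR3 1 (m - 1) (by omega) (by omega)).1
        have e2 : R 1 m = r (m - 1) := by
          have := (hR2 1).1
          rwa [hm1] at this
        rw [e1, e2, zero_add]
      · have e1 := (hR3 1 (m - 1) (by omega) (by omega)).2
        have e2 : Z 1 m = z (m - 1) := by
          have := (hR2 1).2
          rwa [hm1] at this
        rw [e1, e2, zero_add]
    | succ k ih =>
      intro i hi
      have step : φ (m + (k + 1) + 1) (R (k + 2)) (Z (k + 2)) i
          = φ (m + (k + 1)) (R (k + 1)) (Z (k + 1)) i := by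
        refine hhrsn (m + (k + 1)) (R (k + 1)) (Z (k + 1)) (R (k + 2)) (Z (k + 2))
          (hvR (k + 1) (by omega)) (hvR (k + 2) (by omega)) ?_ ?_ ?_ i (by omega)
        · intro j hj
          by_cases h1 : j < m - 1
          · rw [(hR1 (k + 2) j h1).1, (hR1 (k + 2) j h1).2,
              (hR1 (k + 1) j h1).1, (hR1 (k + 1) j h1).2]
            exact ⟨rfl, rfl⟩
          · rw [(hR3 (k + 2) j h1 (by omega)).1, (hR3 (k + 2) j h1 (by omega)).2,
              (hR3 (k + 1) j h1 (by omega)).1, (hR3 (k + 1) j h1 (by omega)).2]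
            exact ⟨rfl, rfl⟩
        · have e0 : m + (k + 1) - 1 = m - 1 + (k + 1) := by omega
          rw [e0]
          have e1 := (hR3 (k + 2) (m - 1 + (k + 1)) (by omega) (by omega)).1
          have e2 : R (k + 2) (m + (k + 1)) = r (m - 1) := by
            have := (hR2 (k + 2)).1
            have e : m - 1 + (k + 2) = m + (k + 1) := by omega
            rwa [e] at this
          rw [e1, e2, zero_add, (hR2 (k + 1)).1]
        · have e0 : m + (k + 1) - 1 = m - 1 + (k + 1) := by omega
          rw [e0]
          have e1 := (hR3 (k + 2) (m - 1 + (k + 1)) (by omega) (by omega)).2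
          have e2 : Z (k + 2) (m + (k + 1)) = z (m - 1) := by
            have := (hR2 (k + 2)).2
            have e : m - 1 + (k + 2) = m + (k + 1) := by omega
            rwa [e] at this
          rw [e1, e2, zero_add, (hR2 (k + 1)).2]
      have e : m + (k + 1) + 1 = m + (k + 1 + 1) := by omega
      rw [e] at step
      rw [step]
      exact ih i hi
  -- first part
  set S : ℝ := ∑ j ∈ Finset.range m, (r j - z j) with hSdef
  have hfirst : ∀ i, i + 1 < m → φ m r z i = z i := by
    intro i hi
    set s : ℝ := φ m r z i - z i with hsdef
    have hs0 : 0 ≤ s := sub_nonneg.2 (hnlb m r z hv' i (by omega))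
    have key : ∀ k : ℕ, ((k : ℝ) + 2) * s ≤ S := by
      intro k
      have hvk := hvR (k + 1) (by omega)
      have hbal := (hrule (m + (k + 1)) (R (k + 1)) (Z (k + 1)) hvk).2
      have htot : ∑ j ∈ Finset.range (m + (k + 1)), (φ (m + (k + 1)) (R (k + 1)) (Z (k + 1)) j
          - Z (k + 1) j) = S := by
        rw [Finset.sum_sub_distrib, hbal, hsumR (k + 1) (by omega), hsumZ (k + 1) (by omega),
          hSdef, Finset.sum_sub_distrib]
      have hIco : ∑ j ∈ Finset.Ico (m - 1) (m + (k + 1)),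
          (φ (m + (k + 1)) (R (k + 1)) (Z (k + 1)) j - Z (k + 1) j) ≤ S := by
        rw [← htot, Finset.range_eq_Ico]
        refine Finset.sum_le_sum_of_subset_of_nonneg
          (Finset.Ico_subset_Ico (Nat.zero_le _) le_rfl) ?_
        intro j hj _
        exact sub_nonneg.2 (hnlb _ _ _ hvk j (Finset.mem_Ico.1 hj).2)
      have hlow : ∀ j ∈ Finset.Ico (m - 1) (m + (k + 1)),
          s ≤ φ (m + (k + 1)) (R (k + 1)) (Z (k + 1)) j - Z (k + 1) j := by
        intro j hj
        rw [Finset.mem_Ico] at hj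
        have h1 := hhop (m + (k + 1)) (R (k + 1)) (Z (k + 1)) hvk j hj.2 i (by omega) (by omega)
        rw [chain k i hi, (hR1 (k + 1) i (by omega)).2] at h1
        exact h1
      have hcard : (Finset.Ico (m - 1) (m + (k + 1))).card = k + 2 := by
        rw [Nat.card_Ico]; omega
      calc ((k : ℝ) + 2) * s
          = ∑ _j ∈ Finset.Ico (m - 1) (m + (k + 1)), s := by
            rw [Finset.sum_const, hcard, nsmul_eq_mul]
            push_cast
            ring
        _ ≤ ∑ j ∈ Finset.Ico (m - 1) (m + (k + 1)),
              (φ (m + (k + 1)) (R (k + 1)) (Z (k + 1)) j - Z (k + 1) j) :=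
            Finset.sum_le_sum hlow
        _ ≤ S := hIco
    have hs : s = 0 := by
      by_contra hne
      have hpos : 0 < s := lt_of_le_of_ne hs0 (Ne.symm hne)
      obtain ⟨k, hk⟩ := exists_nat_gt (S / s)
      have h1 : S / s < (k : ℝ) + 2 := by linarith
      have h2 : S < ((k : ℝ) + 2) * s := by
        rw [div_lt_iff₀ hpos] at h1
        linarith
      linarith [key k]
    have : φ m r z i - z i = 0 := hs
    linarith
  refine ⟨hfirst, ?_⟩
  -- second part
  have hbal := (hrule m r z hv').2
  have hdecomp : ∀ f : ℕ → ℝ, ∑ j ∈ Finset.range m, f j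
      = ∑ j ∈ Finset.range (m - 1), f j + f (m - 1) := by
    intro f
    rw [← Finset.sum_range_succ, hm1]
  have hsplitφ : ∑ j ∈ Finset.range m, φ m r z j
      = ∑ j ∈ Finset.range (m - 1), z j + φ m r z (m - 1) := by
    rw [hdecomp (fun j => φ m r z j)]
    congr 1
    exact Finset.sum_congr rfl fun j hj => hfirst j (by have := Finset.mem_range.1 hj; omega)
  have hsplitz : ∑ j ∈ Finset.range m, z j
      = ∑ j ∈ Finset.range (m - 1), z j + z (m - 1) := hdecomp z
  have hsub : ∑ j ∈ Finset.range m, (r j - z j)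
      = ∑ j ∈ Finset.range m, r j - ∑ j ∈ Finset.range m, z j := Finset.sum_sub_distrib _ _
  rw [hsplitφ] at hbal
  rw [hSdef, hsub, hsplitz]
  linarith
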